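/- Let k be a field of characteristic p > 0, let n ≥ 1, let h_1, …, h_n be integers with 1 < h_i < p for every i, and let P_1, …, P_n be pairwise distinct elements of k. If the rational function F = 1/∏_{i=1}^n (x − P_i)^{h_i} is exact, then there exists a polynomial g over k with deg g < ∑_{i=1}^n (h_i − 1) such that F is the formal derivative of g/∏_{i=1}^n (x − P_i)^{h_i − 1}. -/

import Mathlib

open Polynomial

/-- `HasDerivRF f g` means `g` is the formal derivative of the rational function `f` in `k(x)`:
if `f = u / v` with `v ≠ 0`, then `g = (u' v - u v') / v ^ 2`. -/
def HasDerivRF {k : Type*} [Field k] (f g : RatFunc k) : Prop :=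
  ∃ u v : Polynomial k, v ≠ 0 ∧
    f = algebraMap (Polynomial k) (RatFunc k) u / algebraMap (Polynomial k) (RatFunc k) v ∧
    g = algebraMap (Polynomial k) (RatFunc k)
          (Polynomial.derivative u * v - u * Polynomial.derivative v) /
        algebraMap (Polynomial k) (RatFunc k) (v ^ 2)

/-- A rational function is exact if it is the formal derivative of some rational function. -/
def IsExactRF {k : Type*} [Field k] (g : RatFunc k) : Prop := ∃ f : RatFunc k, HasDerivRF f g

namespace Stmt15
open HahnSeries Finset
variable {k : Type*} [Field k]

/-- derivative on Laurent series -/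
noncomputable def lsD (f : LaurentSeries k) : LaurentSeries k where
  coeff n := (n + 1) • f.coeff (n + 1)
  isPWO_support' := by
    refine (f.isPWO_support.image_of_monotone (f := fun n => n - 1)
      (fun a b hab => by simpa using by omega)).mono ?_
    intro n hn
    simp only [Function.mem_support, ne_eq] at hn
    refine ⟨n + 1, fun h => hn (by rw [h, smul_zero]), by simp⟩

@[simp] lemma lsD_coeff (f : LaurentSeries k) (n : ℤ) :
    (lsD f).coeff n = (n + 1) • f.coeff (n + 1) := rfl

lemma lsD_add (f g : LaurentSeries k) : lsD (f + g) = lsD f + lsD g := by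
  ext n; simp [smul_add]

@[simp] lemma lsD_coeff_neg_one (f : LaurentSeries k) : (lsD f).coeff (-1) = 0 := by
  simp

lemma lsD_single_mul (m : ℤ) (c : k) (f : LaurentSeries k) :
    lsD (single m c * f) = single m c * lsD f + single (m - 1) (m • c) * f := by
  ext n
  have h1 : (single m c * f).coeff (n + 1) = c * f.coeff (n + 1 - m) := by
    rw [show n + 1 = (n + 1 - m) + m by ring, coeff_single_mul_add]
    ring_nf
  have h2 : (single m c * lsD f).coeff n = c * ((n + 1 - m) • f.coeff (n + 1 - m)) := by
    rw [show n = (n - m) + m by ring, coeff_single_mul_add]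
    simp only [lsD_coeff]
    ring_nf
  have h3 : (single (m - 1) (m • c) * f).coeff n = (m • c) * f.coeff (n + 1 - m) := by
    rw [show n = (n + 1 - m) + (m - 1) by ring, coeff_single_mul_add]
    rw [show n + 1 - m + (m - 1) + 1 - m = n + 1 - m by ring]
  simp only [lsD_coeff, HahnSeries.coeff_add]
  rw [h1, h2, h3]
  simp only [zsmul_eq_mul]
  push_cast
  ring


noncomputable def pl (p : Polynomial k) : LaurentSeries k := ((p : PowerSeries k) : LaurentSeries k)

lemma pl_coeff (p : Polynomial k) (i : ℤ) :
    (pl p).coeff i = if i < 0 then 0 else p.coeff i.natAbs := by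
  rw [pl, PowerSeries.coeff_coe, Polynomial.coeff_coe]

lemma pl_monomial (m : ℕ) (c : k) : pl (monomial m c) = single (m : ℤ) c := by
  ext i
  rw [pl_coeff, coeff_single]
  split_ifs with h1 h2 h2
  · omega
  · rfl
  · rw [coeff_monomial, if_pos (by omega)]
  · rw [coeff_monomial, if_neg (by omega)]

lemma pl_add (p q : Polynomial k) : pl (p + q) = pl p + pl q := by
  simp [pl, Polynomial.coe_add, PowerSeries.coe_add]

lemma pl_mul (p q : Polynomial k) : pl (p * q) = pl p * pl q := by
  simp [pl, Polynomial.coe_mul, PowerSeries.coe_mul]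

lemma pl_one : pl (1 : Polynomial k) = 1 := by
  simp [pl, Polynomial.coe_one, PowerSeries.coe_one]


lemma pl_zero : pl (0 : Polynomial k) = 0 := by
  ext i; simp [pl, Polynomial.coe_zero, PowerSeries.coe_zero]

lemma pl_sub (p q : Polynomial k) : pl (p - q) = pl p - pl q := by
  simp [pl, Polynomial.coe_sub, PowerSeries.coe_sub]

lemma pl_eq_zero {p : Polynomial k} : pl p = 0 ↔ p = 0 := by
  constructor
  · intro h
    ext n
    have := congr_arg (fun f => HahnSeries.coeff f (n : ℤ)) h
    simpa [pl_coeff] using this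
  · rintro rfl; ext i; simp [pl_coeff]


lemma lsD_one : lsD (1 : LaurentSeries k) = 0 := by
  ext n
  rcases eq_or_ne n (-1) with rfl | hn
  · simp
  · have : ((1 : LaurentSeries k)).coeff (n + 1) = 0 := by
      rw [show (1 : LaurentSeries k) = single 0 1 from rfl, coeff_single, if_neg (by omega)]
    rw [lsD_coeff, this, smul_zero]
    simp

lemma lsD_pl_mul (u : Polynomial k) (f : LaurentSeries k) :
    lsD (pl u * f) = pl (derivative u) * f + pl u * lsD f := by
  induction u using Polynomial.induction_on' with
  | add p q hp hq =>
    rw [pl_add, add_mul, lsD_add, hp, hq, derivative_add, pl_add]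
    ring
  | monomial m c =>
    rw [pl_monomial, lsD_single_mul, derivative_monomial]
    rcases Nat.eq_zero_or_pos m with rfl | hm
    · have h1 : (single ((0:ℕ) - 1 : ℤ) (((0:ℕ):ℤ) • c) : LaurentSeries k) = 0 := by
        simp [single_eq_zero]
      have h2 : pl (monomial (0 - 1) (c * ((0:ℕ):k))) = 0 := by
        simp only [Nat.cast_zero, mul_zero, monomial_zero_right, pl_zero]
      rw [h1, h2]
      ring
    · rw [pl_monomial]
      have : ((m - 1 : ℕ) : ℤ) = (m : ℤ) - 1 := by omega
      rw [this]
      have : c * (m : k) = (m : ℤ) • c := by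
        simp [zsmul_eq_mul, mul_comm]
      rw [this, add_comm]

lemma lsD_pl (u : Polynomial k) : lsD (pl u) = pl (derivative u) := by
  have := lsD_pl_mul u 1
  simpa [lsD_one] using this

lemma residue_deriv (u v : Polynomial k) (hv : v ≠ 0) :
    ((pl (derivative u * v - u * derivative v)) / (pl v ^ 2)).coeff (-1) = 0 := by
  have hv' : pl v ≠ 0 := fun h => hv (pl_eq_zero.mp h)
  set f : LaurentSeries k := pl u / pl v with hf
  have hu : pl u = pl v * f := by rw [hf, mul_div_assoc']; exact (mul_div_cancel_left₀ _ hv').symm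
  have hD : pl (derivative u) = pl (derivative v) * f + pl v * lsD f := by
    rw [← lsD_pl, hu, lsD_pl_mul]
  have : pl (derivative u * v - u * derivative v) / (pl v ^ 2) = lsD f := by
    rw [pl_sub, pl_mul, pl_mul, hD, hu]
    field_simp
    ring
  rw [this]
  simp


lemma coe_algebraMap_ratFunc (p : Polynomial k) :
    ((algebraMap (Polynomial k) (RatFunc k) p : RatFunc k) : LaurentSeries k) = pl p := by
  rw [show (algebraMap (Polynomial k) (RatFunc k)) p = (p : RatFunc k) from rfl, ← RatFunc.coe_coe]
  rfl

/-- The residue of a rational function at a point `a`. -/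
noncomputable def Res (a : k) (f : RatFunc k) : k :=
  ((RatFunc.laurent a f : RatFunc k) : LaurentSeries k).coeff (-1)

lemma res_add (a : k) (f g : RatFunc k) : Res a (f + g) = Res a f + Res a g := by
  simp [Res, map_add]

lemma res_zero (a : k) : Res a (0 : RatFunc k) = 0 := by simp [Res]

lemma res_sum {ι : Type*} (a : k) (s : Finset ι) (f : ι → RatFunc k) :
    Res a (∑ i ∈ s, f i) = ∑ i ∈ s, Res a (f i) := by
  classical
  induction s using Finset.induction_on with
  | empty => simp [res_zero]
  | insert x s hx ih => rw [Finset.sum_insert hx, res_add, ih, Finset.sum_insert hx]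

lemma derivative_taylor (r : k) (p : Polynomial k) :
    derivative (taylor r p) = taylor r (derivative p) := by
  rw [taylor_apply, taylor_apply, derivative_comp]
  simp

lemma res_of_hasDeriv {f g : RatFunc k} (hd : HasDerivRF f g) (a : k) : Res a g = 0 := by
  obtain ⟨u, v, hv, -, rfl⟩ := hd
  set U := taylor a u
  set V := taylor a v
  have hV : V ≠ 0 := fun h => hv (taylor_injective a (by rw [map_zero]; exact h))
  have h1 : RatFunc.laurent a
      (algebraMap (Polynomial k) (RatFunc k) (derivative u * v - u * derivative v) /
        algebraMap (Polynomial k) (RatFunc k) (v ^ 2)) =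
      algebraMap (Polynomial k) (RatFunc k) (derivative U * V - U * derivative V) /
        algebraMap (Polynomial k) (RatFunc k) (V ^ 2) := by
    rw [map_div₀, RatFunc.laurent_algebraMap, RatFunc.laurent_algebraMap]
    congr 2
    · rw [map_sub, taylor_mul, taylor_mul, derivative_taylor, derivative_taylor]
    · rw [sq, taylor_mul, sq]
  rw [Res, h1, map_div₀, coe_algebraMap_ratFunc, coe_algebraMap_ratFunc]
  have : pl (V ^ 2) = pl V ^ 2 := by
    show ((↑(V ^ 2) : PowerSeries k) : LaurentSeries k) = _
    rw [Polynomial.coe_pow]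
    push_cast
    rfl
  rw [this]
  exact residue_deriv U V hV

lemma res_regular (a : k) (u w : Polynomial k) (hw : w.coeff 0 ≠ 0) :
    (((algebraMap (Polynomial k) (RatFunc k) u /
        algebraMap (Polynomial k) (RatFunc k) w : RatFunc k)) : LaurentSeries k).coeff (-1) = 0 := by
  have hunit : IsUnit (w : PowerSeries k) := by
    rw [PowerSeries.isUnit_iff_constantCoeff]
    rw [← PowerSeries.coeff_zero_eq_constantCoeff_apply, Polynomial.coeff_coe]
    exact isUnit_iff_ne_zero.mpr hw
  obtain ⟨ψ, hψ⟩ : ∃ ψ : PowerSeries k, (w : PowerSeries k) * ψ = 1 := by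
    obtain ⟨t, ht⟩ := hunit
    exact ⟨(↑t⁻¹ : PowerSeries k), by rw [← ht]; simp [Units.mul_inv]⟩
  have hw0 : pl w ≠ 0 := fun h => hw (by
    have := pl_eq_zero.mp h; simp [this])
  have key : ((algebraMap (Polynomial k) (RatFunc k) u /
      algebraMap (Polynomial k) (RatFunc k) w : RatFunc k) : LaurentSeries k) =
      (((u : PowerSeries k) * ψ : PowerSeries k) : LaurentSeries k) := by
    rw [map_div₀, coe_algebraMap_ratFunc, coe_algebraMap_ratFunc]
    rw [div_eq_iff hw0]
    show pl u = (((u : PowerSeries k) * ψ : PowerSeries k) : LaurentSeries k) * pl w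
    rw [pl, pl, ← PowerSeries.coe_mul,
      show ((u : PowerSeries k) * ψ) * (w : PowerSeries k)
        = (u : PowerSeries k) * ((w : PowerSeries k) * ψ) by ring, hψ, mul_one]
  rw [key, PowerSeries.coeff_coe, if_pos (by norm_num)]


open scoped Classical in
lemma res_pow (a b c : k) (m : ℕ) :
    Res a (algebraMap (Polynomial k) (RatFunc k) (Polynomial.C c) /
      (RatFunc.X - RatFunc.C b) ^ m) = if b = a ∧ m = 1 then c else 0 := by
  have hC : RatFunc.laurent a (algebraMap (Polynomial k) (RatFunc k) (Polynomial.C c)) =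
      algebraMap (Polynomial k) (RatFunc k) (Polynomial.C c) := by
    rw [RatFunc.laurent_algebraMap, taylor_C]
  rcases eq_or_ne b a with rfl | hba
  · have h1 : RatFunc.laurent b (algebraMap (Polynomial k) (RatFunc k) (Polynomial.C c) /
        (RatFunc.X - RatFunc.C b) ^ m) =
        algebraMap (Polynomial k) (RatFunc k) (Polynomial.C c) / RatFunc.X ^ m := by
      rw [map_div₀, map_pow, map_sub, RatFunc.laurent_X, RatFunc.laurent_C, hC]
      ring_nf
    rw [Res, h1, map_div₀, map_pow, RatFunc.coe_X, coe_algebraMap_ratFunc]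
    have hplC : pl (Polynomial.C c) = single (0 : ℤ) c := by
      have := pl_monomial (k := k) 0 c
      simpa using this
    have hm : ((single (1:ℤ) (1:k) : LaurentSeries k)) ^ m = single (m : ℤ) 1 := by
      rw [single_pow]; norm_num
    have hne : (single (m:ℤ) (1:k) : LaurentSeries k) ≠ 0 := single_ne_zero one_ne_zero
    have hdiv : (single (0:ℤ) c : LaurentSeries k) / single (m : ℤ) (1:k) = single (-(m:ℤ)) c := by
      rw [div_eq_iff hne, single_mul_single]
      norm_num
    rw [hplC, hm, hdiv, coeff_single]
    by_cases hm1 : m = 1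
    · simp [hm1]
    · rw [if_neg (by omega), if_neg (by tauto)]
  · have h1 : RatFunc.laurent a (algebraMap (Polynomial k) (RatFunc k) (Polynomial.C c) /
        (RatFunc.X - RatFunc.C b) ^ m) =
        algebraMap (Polynomial k) (RatFunc k) (Polynomial.C c) /
          algebraMap (Polynomial k) (RatFunc k) ((Polynomial.X + Polynomial.C (a - b)) ^ m) := by
      rw [map_div₀, map_pow, map_sub, RatFunc.laurent_X, RatFunc.laurent_C, hC]
      rw [map_pow, map_add, RatFunc.algebraMap_X, RatFunc.algebraMap_C, map_sub]
      simp only [map_sub, RatFunc.algebraMap_C]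
      ring_nf
    rw [Res, h1, if_neg (by tauto)]
    refine res_regular a _ _ ?_
    rw [coeff_zero_eq_eval_zero]
    simp only [eval_pow, eval_add, eval_X, eval_C, zero_add]
    exact pow_ne_zero _ (sub_ne_zero.mpr (Ne.symm hba))


lemma hasDerivRF_zero : HasDerivRF (0 : RatFunc k) 0 :=
  ⟨0, 1, one_ne_zero, by simp, by simp⟩

lemma hasDerivRF_add {f₁ g₁ f₂ g₂ : RatFunc k} (h1 : HasDerivRF f₁ g₁) (h2 : HasDerivRF f₂ g₂) :
    HasDerivRF (f₁ + f₂) (g₁ + g₂) := by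
  obtain ⟨u₁, v₁, hv₁, rfl, rfl⟩ := h1
  obtain ⟨u₂, v₂, hv₂, rfl, rfl⟩ := h2
  refine ⟨u₁ * v₂ + u₂ * v₁, v₁ * v₂, mul_ne_zero hv₁ hv₂, ?_, ?_⟩
  · have e₁ := RatFunc.algebraMap_ne_zero hv₁
    have e₂ := RatFunc.algebraMap_ne_zero hv₂
    simp only [map_add, map_mul]
    field_simp
    try ring
  · have e₁ := RatFunc.algebraMap_ne_zero hv₁
    have e₂ := RatFunc.algebraMap_ne_zero hv₂
    simp only [derivative_add, derivative_mul, map_add, map_mul, map_sub, map_pow]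
    field_simp
    ring

lemma hasDerivRF_sum {ι : Type*} (s : Finset ι) (f g : ι → RatFunc k)
    (h : ∀ i ∈ s, HasDerivRF (f i) (g i)) :
    HasDerivRF (∑ i ∈ s, f i) (∑ i ∈ s, g i) := by
  classical
  induction s using Finset.induction_on with
  | empty => simpa using hasDerivRF_zero
  | insert x s hx ih =>
    rw [Finset.sum_insert hx, Finset.sum_insert hx]
    exact hasDerivRF_add (h x (Finset.mem_insert_self x s))
      (ih fun i hi => h i (Finset.mem_insert_of_mem hi))

lemma hasDerivRF_base (b P : k) (m : ℕ) :
    HasDerivRF (algebraMap (Polynomial k) (RatFunc k) (Polynomial.C b) /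
        (RatFunc.X - RatFunc.C P) ^ m)
      (algebraMap (Polynomial k) (RatFunc k) (Polynomial.C (-(m : k) * b)) /
        (RatFunc.X - RatFunc.C P) ^ (m + 1)) := by
  have hXP : (Polynomial.X - Polynomial.C P : Polynomial k) ≠ 0 := X_sub_C_ne_zero P
  have hXPr : (RatFunc.X - RatFunc.C P : RatFunc k) ≠ 0 := by
    rw [← RatFunc.algebraMap_X, ← RatFunc.algebraMap_C, ← map_sub]
    exact RatFunc.algebraMap_ne_zero hXP
  refine ⟨Polynomial.C b, (Polynomial.X - Polynomial.C P) ^ m, pow_ne_zero _ hXP, ?_, ?_⟩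
  · simp only [map_pow, map_sub, RatFunc.algebraMap_X, RatFunc.algebraMap_C]
  · rcases Nat.eq_zero_or_pos m with rfl | hm
    · simp
    · obtain ⟨m', rfl⟩ : ∃ m', m = m' + 1 := ⟨m - 1, by omega⟩
      have hpow : ∀ j : ℕ, (RatFunc.X - RatFunc.C P) ^ j
          = algebraMap (Polynomial k) (RatFunc k) ((Polynomial.X - Polynomial.C P) ^ j) := by
        intro j; simp only [map_pow, map_sub, RatFunc.algebraMap_X, RatFunc.algebraMap_C]
      rw [hpow, div_eq_div_iff (RatFunc.algebraMap_ne_zero (pow_ne_zero _ hXP))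
        (RatFunc.algebraMap_ne_zero (pow_ne_zero _ (pow_ne_zero _ hXP))), ← map_mul, ← map_mul]
      congr 1
      simp only [derivative_C, zero_mul, zero_sub, derivative_pow, derivative_sub,
        derivative_X, sub_zero, mul_one, Nat.add_sub_cancel, Polynomial.C_neg, Polynomial.C_mul]
      push_cast
      ring


lemma exists_pf {ι : Type*} [DecidableEq ι] (s : Finset ι) (g : ι → Polynomial k)
    (hg : ∀ i ∈ s, (g i).Monic)
    (hcop : ∀ i ∈ s, ∀ j ∈ s, i ≠ j → IsCoprime (g i) (g j)) :
    ∀ f : Polynomial k, f.degree < (∏ i ∈ s, g i).degree →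
      ∃ r : ι → Polynomial k, (∀ i ∈ s, (r i).degree < (g i).degree) ∧
        f = ∑ i ∈ s, r i * ∏ j ∈ s.erase i, g j := by
  classical
  induction s using Finset.induction_on with
  | empty =>
    intro f hf
    refine ⟨fun _ => 0, by simp, ?_⟩
    simp only [Finset.prod_empty, degree_one] at hf
    have : f = 0 := by
      by_contra hne
      rw [degree_eq_natDegree hne] at hf
      exact absurd hf (by exact_mod_cast Nat.not_lt_zero _)
    simp [this]
  | insert a s ha ih =>
    intro f hf
    have hga : (g a).Monic := hg a (mem_insert_self a s)
    have hgs : ∀ i ∈ s, (g i).Monic := fun i hi => hg i (mem_insert_of_mem hi)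
    have hPi : (∏ i ∈ s, g i).Monic := monic_prod_of_monic _ _ hgs
    have hPib : (∏ i ∈ s, g i).degree ≠ ⊥ := fun hb => hPi.ne_zero (degree_eq_bot.mp hb)
    have hgab : (g a).degree ≠ ⊥ := fun hb => hga.ne_zero (degree_eq_bot.mp hb)
    have hco : IsCoprime (g a) (∏ i ∈ s, g i) :=
      IsCoprime.prod_right fun i hi =>
        hcop a (mem_insert_self a s) i (mem_insert_of_mem hi) (fun e => ha (e ▸ hi))
    obtain ⟨p, q, hpq⟩ := hco
    set ra := (f * q) %ₘ (g a) with hra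
    set d := (f * q) /ₘ (g a) with hd
    have hdeg_ra : ra.degree < (g a).degree := degree_modByMonic_lt _ hga
    have h1 : f * q = ra + g a * d := (modByMonic_add_div (f * q) (g a)).symm
    have hsplit : f = ra * (∏ i ∈ s, g i) + (f * p + d * (∏ i ∈ s, g i)) * g a := by
      calc f = f * 1 := by ring
        _ = f * (p * g a + q * ∏ i ∈ s, g i) := by rw [hpq]
        _ = (f * p) * g a + (f * q) * ∏ i ∈ s, g i := by ring
        _ = (f * p) * g a + (ra + g a * d) * ∏ i ∈ s, g i := by rw [← h1]
        _ = ra * (∏ i ∈ s, g i) + (f * p + d * (∏ i ∈ s, g i)) * g a := by ring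
    set f1 := f * p + d * (∏ i ∈ s, g i) with hf1
    have hprod : (∏ i ∈ insert a s, g i) = g a * ∏ i ∈ s, g i := prod_insert ha
    have hdeg_f1 : f1.degree < (∏ i ∈ s, g i).degree := by
      by_cases hz : f1 = 0
      · rw [hz, degree_zero]
        exact Ne.bot_lt hPib
      · have h2 : f1 * g a = f - ra * (∏ i ∈ s, g i) := by rw [hsplit]; ring
        have hfa : f.degree < (∏ i ∈ s, g i).degree + (g a).degree := by
          rw [hprod, degree_mul, add_comm] at hf
          exact hf
        have hra2 : (ra * ∏ i ∈ s, g i).degree < (∏ i ∈ s, g i).degree + (g a).degree := by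
          rw [degree_mul, add_comm ra.degree]
          exact WithBot.add_lt_add_left hPib hdeg_ra
        have h3 : f1.degree + (g a).degree < (∏ i ∈ s, g i).degree + (g a).degree := by
          rw [← degree_mul, h2]
          exact lt_of_le_of_lt (degree_sub_le _ _) (max_lt hfa hra2)
        exact lt_of_add_lt_add_right h3
    obtain ⟨r, hr, hsum⟩ := ih hgs (fun i hi j hj hij =>
      hcop i (mem_insert_of_mem hi) j (mem_insert_of_mem hj) hij) f1 hdeg_f1
    refine ⟨Function.update r a ra, ?_, ?_⟩
    · intro i hi
      rcases eq_or_ne i a with rfl | hia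
      · simpa using hdeg_ra
      · rw [Function.update_of_ne hia]
        exact hr i ((mem_insert.mp hi).resolve_left hia)
    · rw [Finset.sum_insert ha, Function.update_self, erase_insert ha]
      have hterm : ∑ i ∈ s, Function.update r a ra i * ∏ j ∈ (insert a s).erase i, g j
          = (∑ i ∈ s, r i * ∏ j ∈ s.erase i, g j) * g a := by
        rw [Finset.sum_mul]
        refine Finset.sum_congr rfl fun i hi => ?_
        have hia : i ≠ a := fun e => ha (e ▸ hi)
        rw [Function.update_of_ne hia]
        rw [erase_insert_of_ne hia.symm, prod_insert (fun hmem => ha (mem_of_mem_erase hmem))]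
        ring
      rw [hterm, ← hsum]
      exact hsplit


end Stmt15
section Main
open Stmt15 Polynomial Finset

theorem stmt15 {k : Type*} [Field k] (p : ℕ) [CharP k p] (hp : 0 < p)
    (n : ℕ) (hn : 1 ≤ n) (h : Fin n → ℕ) (hh : ∀ i, 1 < h i ∧ h i < p)
    (P : Fin n → k) (hP : Function.Injective P)
    (hex : IsExactRF ((∏ i, (RatFunc.X - RatFunc.C (P i)) ^ h i)⁻¹)) :
    ∃ g : Polynomial k, g.natDegree < ∑ i, (h i - 1) ∧
      HasDerivRF
        (algebraMap (Polynomial k) (RatFunc k) g /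
          ∏ i, (RatFunc.X - RatFunc.C (P i)) ^ (h i - 1))
        ((∏ i, (RatFunc.X - RatFunc.C (P i)) ^ h i)⁻¹) := by
  classical
  set L := algebraMap (Polynomial k) (RatFunc k) with hL
  set gp : Fin n → Polynomial k := fun i => (X - C (P i)) ^ h i with hgp
  set V : Polynomial k := ∏ i, gp i with hV
  have hXsub : ∀ b : k, (X - C b : Polynomial k) ≠ 0 := fun b => X_sub_C_ne_zero b
  have hXsubR : ∀ b : k, (RatFunc.X - RatFunc.C b : RatFunc k) ≠ 0 := by
    intro b
    rw [← RatFunc.algebraMap_X, ← RatFunc.algebraMap_C, ← map_sub]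
    exact RatFunc.algebraMap_ne_zero (hXsub b)
  have hgp0 : ∀ i, gp i ≠ 0 := fun i => pow_ne_zero _ (hXsub (P i))
  have hV0 : V ≠ 0 := Finset.prod_ne_zero_iff.mpr fun i _ => hgp0 i
  have hLpow : ∀ (b : k) (m : ℕ), (RatFunc.X - RatFunc.C b) ^ m = L ((X - C b) ^ m) := by
    intro b m
    simp only [hL, map_pow, map_sub, RatFunc.algebraMap_X, RatFunc.algebraMap_C]
  have hLV : (∏ i, (RatFunc.X - RatFunc.C (P i)) ^ h i) = L V := by
    rw [hV, map_prod]
    exact Finset.prod_congr rfl fun i _ => hLpow (P i) (h i)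
  have hdeggp : ∀ i, (gp i).degree = (h i : ℕ) := by
    intro i
    rw [hgp]
    simp [degree_pow, degree_X_sub_C]
  -- partial fractions
  obtain ⟨r, hrdeg, hone⟩ :
      ∃ r : Fin n → Polynomial k, (∀ i ∈ univ, (r i).degree < (gp i).degree) ∧
        (1 : Polynomial k) = ∑ i, r i * ∏ j ∈ univ.erase i, gp j := by
    apply exists_pf univ gp
      (fun i _ => (monic_X_sub_C (P i)).pow _)
      (fun i _ j _ hij => (pairwise_coprime_X_sub_C hP hij).pow)
    rw [degree_one, degree_prod]
    have he : ∑ i, (gp i).degree = ((∑ i, h i : ℕ) : WithBot ℕ) := by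
      rw [Nat.cast_sum]
      exact Finset.sum_congr rfl fun i _ => hdeggp i
    rw [he]
    have hpos : 0 < ∑ i, h i :=
      Finset.sum_pos (fun i _ => by have := (hh i).1; omega) ⟨⟨0, hn⟩, mem_univ _⟩
    exact_mod_cast hpos
  -- taylor coefficients
  set a : Fin n → ℕ → k := fun i j => (taylor (P i) (r i)).coeff j with ha
  have htay : ∀ i, r i = ∑ j ∈ range (h i), C (a i j) * (X - C (P i)) ^ j := by
    intro i
    have hnd : (taylor (P i) (r i)).natDegree < h i := by
      rw [natDegree_taylor]
      rcases eq_or_ne (r i) 0 with h0 | h0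
      · rw [h0, natDegree_zero]; have := (hh i).1; omega
      · have hd := hrdeg i (mem_univ i)
        rw [hdeggp i, degree_eq_natDegree h0] at hd
        exact_mod_cast hd
    conv_lhs => rw [← sum_taylor_eq (r i) (P i)]
    rw [Polynomial.sum_over_range' _ (fun m => by simp) (h i) hnd]
  -- F as a double sum
  have hkey : ∀ i : Fin n, L (r i) / L (gp i)
      = ∑ j ∈ range (h i), L (C (a i j)) / (RatFunc.X - RatFunc.C (P i)) ^ (h i - j) := by
    intro i
    have step1 : L (r i) / L (gp i) =
        ∑ j ∈ range (h i), L (C (a i j)) * (RatFunc.X - RatFunc.C (P i)) ^ j / L (gp i) := by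
      rw [← Finset.sum_div]
      congr 1
      conv_lhs => rw [htay i]
      rw [map_sum]
      exact Finset.sum_congr rfl fun j _ => by rw [map_mul, hLpow]
    rw [step1]
    refine Finset.sum_congr rfl fun j hj => ?_
    have hjlt := Finset.mem_range.mp hj
    have hgpi : L (gp i) = (RatFunc.X - RatFunc.C (P i)) ^ h i := by
      rw [hgp]; exact (hLpow (P i) (h i)).symm
    rw [hgpi, div_eq_div_iff (pow_ne_zero _ (hXsubR (P i))) (pow_ne_zero _ (hXsubR (P i)))]
    rw [mul_assoc, ← pow_add]
    congr 2
    omega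
  have hFexp : (∏ i, (RatFunc.X - RatFunc.C (P i)) ^ h i)⁻¹ =
      ∑ i, ∑ j ∈ range (h i), L (C (a i j)) / (RatFunc.X - RatFunc.C (P i)) ^ (h i - j) := by
    calc (∏ i, (RatFunc.X - RatFunc.C (P i)) ^ h i)⁻¹ = L 1 / L V := by
          rw [hLV, map_one, inv_eq_one_div]
      _ = ∑ i, L (r i * ∏ j ∈ univ.erase i, gp j) / L V := by
          rw [← Finset.sum_div, ← map_sum, ← hone]
      _ = ∑ i, L (r i) / L (gp i) := by
          refine Finset.sum_congr rfl fun i _ => ?_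
          rw [div_eq_div_iff (RatFunc.algebraMap_ne_zero hV0) (RatFunc.algebraMap_ne_zero (hgp0 i)),
            ← map_mul, ← map_mul]
          congr 1
          rw [hV, ← Finset.mul_prod_erase univ gp (mem_univ i)]
          ring
      _ = _ := Finset.sum_congr rfl fun i _ => hkey i
  -- residues vanish
  have hres : ∀ i, a i (h i - 1) = 0 := by
    intro i
    have h0 : Res (P i) ((∏ l, (RatFunc.X - RatFunc.C (P l)) ^ h l)⁻¹) = 0 := by
      obtain ⟨f0, hd⟩ := hex
      exact res_of_hasDeriv hd (P i)
    rw [hFexp, res_sum] at h0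
    have hcalc : ∀ l : Fin n, Res (P i)
        (∑ j ∈ range (h l), L (C (a l j)) / (RatFunc.X - RatFunc.C (P l)) ^ (h l - j))
        = if l = i then a i (h i - 1) else 0 := by
      intro l
      rw [res_sum]
      rcases eq_or_ne l i with rfl | hli
      · rw [if_pos rfl]
        rw [Finset.sum_eq_single (h l - 1)]
        · rw [hL, res_pow, if_pos ⟨rfl, by have := (hh l).1; omega⟩]
        · intro j hj hne
          rw [hL, res_pow, if_neg]
          rintro ⟨-, hc⟩
          have := Finset.mem_range.mp hj
          omega
        · intro hmem
          exact absurd (Finset.mem_range.mpr (by have := (hh l).1; omega)) hmem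
      · rw [if_neg hli]
        refine Finset.sum_eq_zero fun j hj => ?_
        rw [hL, res_pow, if_neg]
        rintro ⟨hPe, -⟩
        exact hli (hP hPe)
    rw [Finset.sum_congr rfl (fun l _ => hcalc l)] at h0
    simpa using h0
  -- antiderivative coefficients
  set b : Fin n → ℕ → k := fun i j => -(a i j) / ((h i - 1 - j : ℕ) : k) with hb
  have hab : ∀ i, ∀ j ∈ range (h i), -(((h i - 1 - j : ℕ) : k)) * b i j = a i j := by
    intro i j hj
    have hjlt := Finset.mem_range.mp hj
    rcases eq_or_ne j (h i - 1) with rfl | hne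
    · have hz : h i - 1 - (h i - 1) = 0 := by omega
      simp only [hb, hz, hres i, Nat.cast_zero, neg_zero, zero_mul]
    · have hmpos : 0 < h i - 1 - j := by omega
      have hm0 : ((h i - 1 - j : ℕ) : k) ≠ 0 := by
        rw [Ne, CharP.cast_eq_zero_iff k p]
        intro hdvd
        have := Nat.le_of_dvd hmpos hdvd
        have := (hh i).2
        omega
      simp only [hb]
      field_simp
  -- the HasDerivRF for the double sum
  have hder : HasDerivRF
      (∑ i, ∑ j ∈ range (h i), L (C (b i j)) / (RatFunc.X - RatFunc.C (P i)) ^ (h i - 1 - j))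
      (∑ i, ∑ j ∈ range (h i), L (C (a i j)) / (RatFunc.X - RatFunc.C (P i)) ^ (h i - j)) := by
    apply hasDerivRF_sum
    intro i _
    apply hasDerivRF_sum
    intro j hj
    have base := hasDerivRF_base (b i j) (P i) (h i - 1 - j)
    rw [hab i j hj] at base
    have hexp : h i - 1 - j + 1 = h i - j := by
      have := Finset.mem_range.mp hj
      have := (hh i).1
      omega
    rw [hexp] at base
    rw [hL]
    exact base
  -- the polynomial g
  set g : Polynomial k := ∑ i, (∑ j ∈ range (h i), C (b i j) * (X - C (P i)) ^ j) *
    ∏ l ∈ univ.erase i, (X - C (P l)) ^ (h l - 1) with hg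
  set Q : Polynomial k := ∏ i, (X - C (P i)) ^ (h i - 1) with hQ
  have hLQ : (∏ i, (RatFunc.X - RatFunc.C (P i)) ^ (h i - 1)) = L Q := by
    rw [hQ, map_prod]
    exact Finset.prod_congr rfl fun i _ => hLpow _ _
  have hQ0 : Q ≠ 0 := Finset.prod_ne_zero_iff.mpr fun i _ => pow_ne_zero _ (hXsub (P i))
  have hgQ : L g / ∏ i, (RatFunc.X - RatFunc.C (P i)) ^ (h i - 1) =
      ∑ i, ∑ j ∈ range (h i), L (C (b i j)) / (RatFunc.X - RatFunc.C (P i)) ^ (h i - 1 - j) := by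
    rw [hLQ]
    calc L g / L Q
        = ∑ i, L ((∑ j ∈ range (h i), C (b i j) * (X - C (P i)) ^ j) *
            ∏ l ∈ univ.erase i, (X - C (P l)) ^ (h l - 1)) / L Q := by
          rw [hg, map_sum, Finset.sum_div]
      _ = ∑ i, L (∑ j ∈ range (h i), C (b i j) * (X - C (P i)) ^ j) /
            L ((X - C (P i)) ^ (h i - 1)) := by
          refine Finset.sum_congr rfl fun i _ => ?_
          rw [div_eq_div_iff (RatFunc.algebraMap_ne_zero hQ0)
            (RatFunc.algebraMap_ne_zero (pow_ne_zero _ (hXsub (P i)))), ← map_mul, ← map_mul]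
          congr 1
          rw [hQ, ← Finset.mul_prod_erase univ (fun l => (X - C (P l)) ^ (h l - 1)) (mem_univ i)]
          ring
      _ = _ := by
          refine Finset.sum_congr rfl fun i _ => ?_
          rw [map_sum, Finset.sum_div]
          refine Finset.sum_congr rfl fun j hj => ?_
          have hjlt := Finset.mem_range.mp hj
          rw [map_mul, ← hLpow (P i) j, ← hLpow (P i) (h i - 1)]
          rw [div_eq_div_iff (pow_ne_zero _ (hXsubR (P i))) (pow_ne_zero _ (hXsubR (P i)))]
          rw [mul_assoc, ← pow_add]
          congr 2
          omega
  have hgdeg : g.natDegree < ∑ i, (h i - 1) := by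
    have hb0 : ∀ i, b i (h i - 1) = 0 := by
      intro i
      simp only [hb, hres i, neg_zero, zero_div]
    have hinner : ∀ i, (∑ j ∈ range (h i), C (b i j) * (X - C (P i)) ^ j).natDegree ≤ h i - 2 := by
      intro i
      apply natDegree_sum_le_of_forall_le
      intro j hj
      have hjlt := Finset.mem_range.mp hj
      rcases eq_or_ne j (h i - 1) with rfl | hne
      · rw [hb0 i]
        simp
      · refine le_trans (natDegree_mul_le) ?_
        rw [natDegree_C, natDegree_pow, natDegree_X_sub_C]
        have := (hh i).1
        omega
    have hterm : ∀ i : Fin n, ((∑ j ∈ range (h i), C (b i j) * (X - C (P i)) ^ j) *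
        ∏ l ∈ univ.erase i, (X - C (P l)) ^ (h l - 1)).natDegree ≤ (∑ i, (h i - 1)) - 1 := by
      intro i
      refine le_trans natDegree_mul_le ?_
      have hprodle : (∏ l ∈ univ.erase i, (X - C (P l)) ^ (h l - 1)).natDegree ≤
          ∑ l ∈ univ.erase i, (h l - 1) := by
        refine le_trans (natDegree_prod_le _ _) ?_
        refine Finset.sum_le_sum fun l _ => ?_
        rw [natDegree_pow, natDegree_X_sub_C, mul_one]
      have hsum_erase : ∑ l ∈ univ.erase i, (h l - 1) + (h i - 1) = ∑ l, (h l - 1) := by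
        rw [Finset.sum_erase_add _ _ (mem_univ i)]
      have h2 := hinner i
      have h3 := (hh i).1
      omega
    have hH1 : 1 ≤ ∑ i, (h i - 1) := by
      have : 1 ≤ h ⟨0, hn⟩ - 1 := by have := (hh ⟨0, hn⟩).1; omega
      calc 1 ≤ h ⟨0, hn⟩ - 1 := this
        _ ≤ ∑ i, (h i - 1) := Finset.single_le_sum (f := fun i => h i - 1)
              (fun i _ => Nat.zero_le _) (mem_univ (⟨0, hn⟩ : Fin n))
    have := natDegree_sum_le_of_forall_le (s := univ) _ (fun i _ => hterm i)
    rw [hg]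
    omega
  refine ⟨g, hgdeg, ?_⟩
  rw [hgQ, hFexp]
  exact hder
end Main
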